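/- (Laurent expansion, left version.) Let ζ₀ ∈ E₃, ξ₁₀ = f₁(ζ₀), ξ₂₀ = f₂(ζ₀), and 0 ≤ r < R ≤ ∞. Let F̂₁, F̂₄ be holomorphic on the annulus {ξ ∈ ℂ : r < |ξ − ξ₁₀| < R} with Laurent expansions F̂₁(ξ) = ∑_{n∈ℤ} âₙ(ξ − ξ₁₀)ⁿ, F̂₄(ξ) = ∑_{n∈ℤ} d̂ₙ(ξ − ξ₁₀)ⁿ, and F̂₂, F̂₃ holomorphic on {ξ ∈ ℂ : r < |ξ − ξ₂₀| < R} with Laurent expansions F̂₂(ξ) = ∑_{n∈ℤ} b̂ₙ(ξ − ξ₂₀)ⁿ, F̂₃(ξ) = ∑_{n∈ℤ} ĉₙ(ξ − ξ₂₀)ⁿ. Define Φ̂ on K_ζ = {ζ ∈ E₃ : r < |f₁(ζ) − ξ₁₀| < R, r < |f₂(ζ) − ξ₂₀| < R} by Φ̂(ζ) = F̂₁(ξ₁)e₁ + F̂₂(ξ₂)e₂ + F̂₃(ξ₂)e₃ + F̂₄(ξ₁)e₄ with ξ₁ = f₁(ζ), ξ₂ = f₂(ζ). Then for every ζ ∈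 K_ζ the two-sided series ∑_{n∈ℤ} p̂ₙ (ζ − ζ₀)ⁿ, with p̂ₙ = âₙe₁ + b̂ₙe₂ + ĉₙe₃ + d̂ₙe₄ and (ζ − ζ₀)ⁿ := ((ζ − ζ₀)⁻¹)^(−n) for negative n, converges absolutely in the norm of ℍ(ℂ) and its sum equals Φ̂(ζ). -/

import Mathlib

noncomputable section

/-- The algebra of complex quaternions ℍ(ℂ): quaternions over ℂ with
I² = J² = K² = -1, IJ = -JI = K, JK = -KJ = I, KI = -IK = J. -/
abbrev HC : Type := Quaternion ℂ

/-- The quaternion unit I. -/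
def Iq : HC := ⟨0, 1, 0, 0⟩
/-- The quaternion unit J. -/
def Jq : HC := ⟨0, 0, 1, 0⟩
/-- The quaternion unit K. -/
def Kq : HC := ⟨0, 0, 0, 1⟩

/-- e₁ = (1 + iI)/2. -/
def e1 : HC := (2 : ℂ)⁻¹ • (1 + Complex.I • Iq)
/-- e₂ = (1 - iI)/2. -/
def e2 : HC := (2 : ℂ)⁻¹ • (1 - Complex.I • Iq)
/-- e₃ = (iJ - K)/2. -/
def e3 : HC := (2 : ℂ)⁻¹ • (Complex.I • Jq - Kq)
/-- e₄ = (iJ + K)/2. -/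
def e4 : HC := (2 : ℂ)⁻¹ • (Complex.I • Jq + Kq)

/-- The coefficient c₁ of q in the basis {e₁,e₂,e₃,e₄} (q = c₁e₁ + c₂e₂ + c₃e₃ + c₄e₄). -/
def coord1 (q : HC) : ℂ := q.re - Complex.I * q.imI
/-- The coefficient c₂ of q in the basis {e₁,e₂,e₃,e₄}. -/
def coord2 (q : HC) : ℂ := q.re + Complex.I * q.imI
/-- The coefficient c₃ of q in the basis {e₁,e₂,e₃,e₄}. -/
def coord3 (q : HC) : ℂ := -(Complex.I * q.imJ) - q.imK
/-- The coefficient c₄ of q in the basis {e₁,e₂,e₃,e₄}. -/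
def coord4 (q : HC) : ℂ := -(Complex.I * q.imJ) + q.imK

/-- The norm ‖c‖ = √(|c₁|² + |c₂|² + |c₃|² + |c₄|²) of c = c₁e₁ + c₂e₂ + c₃e₃ + c₄e₄. -/
def hnorm (q : HC) : ℝ :=
  Real.sqrt (‖coord1 q‖ ^ 2 + ‖coord2 q‖ ^ 2 +
    ‖coord3 q‖ ^ 2 + ‖coord4 q‖ ^ 2)

/-- i₂ = a₁e₁ + a₂e₂. -/
def i2 (a₁ a₂ : ℂ) : HC := a₁ • e1 + a₂ • e2
/-- i₃ = b₁e₁ + b₂e₂. -/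
def i3 (b₁ b₂ : ℂ) : HC := b₁ • e1 + b₂ • e2

/-- ζ = x·i₁ + y·i₂ + z·i₃ with i₁ = 1. -/
def zeta (a₁ a₂ b₁ b₂ : ℂ) (x y z : ℝ) : HC :=
  (x : ℂ) • (1 : HC) + (y : ℂ) • i2 a₁ a₂ + (z : ℂ) • i3 b₁ b₂

/-- E₃ = {x i₁ + y i₂ + z i₃ : x, y, z ∈ ℝ}. -/
def E3 (a₁ a₂ b₁ b₂ : ℂ) : Set HC :=
  {q | ∃ x y z : ℝ, q = zeta a₁ a₂ b₁ b₂ x y z}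

/-- ξ₁ = f₁(ζ) = x + y a₁ + z b₁. -/
def xi1 (a₁ b₁ : ℂ) (x y z : ℝ) : ℂ := (x : ℂ) + (y : ℂ) * a₁ + (z : ℂ) * b₁
/-- ξ₂ = f₂(ζ) = x + y a₂ + z b₂. -/
def xi2 (a₂ b₂ : ℂ) (x y z : ℝ) : ℂ := (x : ℂ) + (y : ℂ) * a₂ + (z : ℂ) * b₂

/-- Integer powers in ℍ(ℂ): for n < 0, qⁿ := (q⁻¹)^(-n) where q⁻¹ = Ring.inverse q. -/
def zpowQ (q : HC) (n : ℤ) : HC :=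
  if 0 ≤ n then q ^ n.toNat else (Ring.inverse q) ^ (-n).toNat

/-- A two-sided (ℤ-indexed) series ∑ f n converges unconditionally to s in the norm
of ℍ(ℂ). -/
def ZSeriesTendsto (f : ℤ → HC) (s : HC) : Prop :=
  Filter.Tendsto (fun A : Finset ℤ => hnorm ((∑ n ∈ A, f n) - s))
    Filter.atTop (nhds 0)

open scoped Quaternion

section Aux

@[simp] lemma hc_smul_re (s : ℂ) (q : HC) : (s • q).re = s * q.re := rfl
@[simp] lemma hc_smul_imI (s : ℂ) (q : HC) : (s • q).imI = s * q.imI := rfl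
@[simp] lemma hc_smul_imJ (s : ℂ) (q : HC) : (s • q).imJ = s * q.imJ := rfl
@[simp] lemma hc_smul_imK (s : ℂ) (q : HC) : (s • q).imK = s * q.imK := rfl
@[simp] lemma hc_rsmul_re (s : ℝ) (q : HC) : (s • q).re = (s : ℂ) * q.re := rfl
@[simp] lemma hc_rsmul_imI (s : ℝ) (q : HC) : (s • q).imI = (s : ℂ) * q.imI := rfl
@[simp] lemma hc_rsmul_imJ (s : ℝ) (q : HC) : (s • q).imJ = (s : ℂ) * q.imJ := rfl
@[simp] lemma hc_rsmul_imK (s : ℝ) (q : HC) : (s • q).imK = (s : ℂ) * q.imK := rfl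
@[simp] lemma Iq_re : Iq.re = 0 := rfl
@[simp] lemma Iq_imI : Iq.imI = 1 := rfl
@[simp] lemma Iq_imJ : Iq.imJ = 0 := rfl
@[simp] lemma Iq_imK : Iq.imK = 0 := rfl
@[simp] lemma Jq_re : Jq.re = 0 := rfl
@[simp] lemma Jq_imI : Jq.imI = 0 := rfl
@[simp] lemma Jq_imJ : Jq.imJ = 1 := rfl
@[simp] lemma Jq_imK : Jq.imK = 0 := rfl
@[simp] lemma Kq_re : Kq.re = 0 := rfl
@[simp] lemma Kq_imI : Kq.imI = 0 := rfl
@[simp] lemma Kq_imJ : Kq.imJ = 0 := rfl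
@[simp] lemma Kq_imK : Kq.imK = 1 := rfl

lemma one_eqQ : (1:HC) = (1:ℂ)•e1 + (1:ℂ)•e2 := by
  ext <;> simp [e1,e2] <;> ring

lemma mulD (c₁ c₂ w₁ w₂ : ℂ) :
    (c₁•e1+c₂•e2) * (w₁•e1+w₂•e2) = (c₁*w₁)•e1+(c₂*w₂)•e2 := by
  ext <;> simp [e1,e2] <;> ring_nf <;> simp [Complex.I_sq] <;> ring

lemma mulL (c₁ c₂ c₃ c₄ w₁ w₂ : ℂ) :
    (c₁•e1+c₂•e2+c₃•e3+c₄•e4) * (w₁•e1+w₂•e2)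
    = (c₁*w₁)•e1+(c₂*w₂)•e2+(c₃*w₂)•e3+(c₄*w₁)•e4 := by
  ext <;> simp [e1,e2,e3,e4] <;> ring_nf <;>
    simp [Complex.I_sq] <;> ring

lemma powD (w₁ w₂ : ℂ) (k : ℕ) :
    (w₁•e1+w₂•e2) ^ k = (w₁^k)•e1+(w₂^k)•e2 := by
  induction k with
  | zero => simpa using one_eqQ
  | succ k ih => rw [pow_succ, ih, mulD, ← pow_succ, ← pow_succ]

lemma invD (w₁ w₂ : ℂ) (h₁ : w₁ ≠ 0) (h₂ : w₂ ≠ 0) :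
    Ring.inverse (w₁•e1+w₂•e2) = (w₁⁻¹)•e1+(w₂⁻¹)•e2 := by
  have h : (w₁•e1+w₂•e2) * ((w₁⁻¹)•e1+(w₂⁻¹)•e2) = 1 := by
    rw [mulD, mul_inv_cancel₀ h₁, mul_inv_cancel₀ h₂, ← one_eqQ]
  have h' : ((w₁⁻¹)•e1+(w₂⁻¹)•e2) * (w₁•e1+w₂•e2) = 1 := by
    rw [mulD, inv_mul_cancel₀ h₁, inv_mul_cancel₀ h₂, ← one_eqQ]
  have : Ring.inverse (w₁•e1+w₂•e2) = Ring.inverse ((⟨_,_,h,h'⟩ : HCˣ) : HC) := rfl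
  rw [this, Ring.inverse_unit]; rfl

lemma zpowD (w₁ w₂ : ℂ) (h₁ : w₁ ≠ 0) (h₂ : w₂ ≠ 0) (n : ℤ) :
    zpowQ (w₁•e1+w₂•e2) n = (w₁^n)•e1+(w₂^n)•e2 := by
  unfold zpowQ
  split_ifs with h
  · rw [powD]
    obtain ⟨k, rfl⟩ := Int.eq_ofNat_of_zero_le h
    simp
  · rw [invD _ _ h₁ h₂, powD]
    push_neg at h
    obtain ⟨k, rfl⟩ : ∃ k : ℕ, n = -(k:ℤ) := ⟨n.natAbs, by omega⟩
    simp [zpow_neg, inv_pow]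

lemma zeta_sub (a₁ a₂ b₁ b₂ : ℂ) (x y z x₀ y₀ z₀ : ℝ) :
    zeta a₁ a₂ b₁ b₂ x y z - zeta a₁ a₂ b₁ b₂ x₀ y₀ z₀
    = (xi1 a₁ b₁ x y z - xi1 a₁ b₁ x₀ y₀ z₀)•e1
      + (xi2 a₂ b₂ x y z - xi2 a₂ b₂ x₀ y₀ z₀)•e2 := by
  ext <;> simp [zeta, i2, i3, xi1, xi2, e1, e2, -smul_add, -Complex.coe_smul] <;> ring

lemma coord1_eq (c₁ c₂ c₃ c₄ : ℂ) : coord1 (c₁•e1+c₂•e2+c₃•e3+c₄•e4) = c₁ := by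
  simp [coord1,e1,e2,e3,e4]; ring_nf; simp [Complex.I_sq]; ring
lemma coord2_eq (c₁ c₂ c₃ c₄ : ℂ) : coord2 (c₁•e1+c₂•e2+c₃•e3+c₄•e4) = c₂ := by
  simp [coord2,e1,e2,e3,e4]; ring_nf; simp [Complex.I_sq]; ring
lemma coord3_eq (c₁ c₂ c₃ c₄ : ℂ) : coord3 (c₁•e1+c₂•e2+c₃•e3+c₄•e4) = c₃ := by
  simp [coord3,e1,e2,e3,e4]; ring_nf; simp [Complex.I_sq]; ring
lemma coord4_eq (c₁ c₂ c₃ c₄ : ℂ) : coord4 (c₁•e1+c₂•e2+c₃•e3+c₄•e4) = c₄ := by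
  simp [coord4,e1,e2,e3,e4]; ring_nf; simp [Complex.I_sq]; ring

lemma hnorm_nonneg' (q : HC) : 0 ≤ hnorm q := Real.sqrt_nonneg _

lemma hnorm_le (c₁ c₂ c₃ c₄ : ℂ) :
    hnorm (c₁•e1+c₂•e2+c₃•e3+c₄•e4)
      ≤ ‖c₁‖ + ‖c₂‖ + ‖c₃‖ + ‖c₄‖ := by
  unfold hnorm
  rw [coord1_eq, coord2_eq, coord3_eq, coord4_eq]
  have h1 := norm_nonneg c₁
  have h2 := norm_nonneg c₂
  have h3 := norm_nonneg c₃
  have h4 := norm_nonneg c₄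
  rw [show ‖c₁‖ + ‖c₂‖ + ‖c₃‖ + ‖c₄‖
      = Real.sqrt ((‖c₁‖ + ‖c₂‖ + ‖c₃‖ + ‖c₄‖)^2) by
    rw [Real.sqrt_sq (by positivity)]]
  exact Real.sqrt_le_sqrt (by nlinarith)

end Aux

/-- Laurent expansion, left version: if F̂₁, F̂₄ are holomorphic on the
annulus {r < |ξ - ξ₁₀| < R} with Laurent coefficients âₙ, d̂ₙ, and F̂₂, F̂₃ on
{r < |ξ - ξ₂₀| < R} with Laurent coefficients b̂ₙ, ĉₙ, and
Φ̂(ζ) = F̂₁(ξ₁)e₁ + F̂₂(ξ₂)e₂ + F̂₃(ξ₂)e₃ + F̂₄(ξ₁)e₄ on K_ζ, then for every ζ ∈ K_ζ the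
series ∑_{n∈ℤ} p̂ₙ(ζ-ζ₀)ⁿ, p̂ₙ = âₙe₁ + b̂ₙe₂ + ĉₙe₃ + d̂ₙe₄, converges absolutely in
the norm of ℍ(ℂ) to Φ̂(ζ). -/
theorem laurent_left (a₁ a₂ b₁ b₂ : ℂ) (x₀ y₀ z₀ : ℝ) (r R : ENNReal) (hrR : r < R)
    (F₁ F₂ F₃ F₄ : ℂ → ℂ) (a b c d : ℤ → ℂ)
    (hF₁ : DifferentiableOn ℂ F₁
      {ξ : ℂ | r < ENNReal.ofReal (‖ξ - xi1 a₁ b₁ x₀ y₀ z₀‖) ∧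
        ENNReal.ofReal (‖ξ - xi1 a₁ b₁ x₀ y₀ z₀‖) < R})
    (hF₄ : DifferentiableOn ℂ F₄
      {ξ : ℂ | r < ENNReal.ofReal (‖ξ - xi1 a₁ b₁ x₀ y₀ z₀‖) ∧
        ENNReal.ofReal (‖ξ - xi1 a₁ b₁ x₀ y₀ z₀‖) < R})
    (hF₂ : DifferentiableOn ℂ F₂
      {ξ : ℂ | r < ENNReal.ofReal (‖ξ - xi2 a₂ b₂ x₀ y₀ z₀‖) ∧
        ENNReal.ofReal (‖ξ - xi2 a₂ b₂ x₀ y₀ z₀‖) < R})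
    (hF₃ : DifferentiableOn ℂ F₃
      {ξ : ℂ | r < ENNReal.ofReal (‖ξ - xi2 a₂ b₂ x₀ y₀ z₀‖) ∧
        ENNReal.ofReal (‖ξ - xi2 a₂ b₂ x₀ y₀ z₀‖) < R})
    (ha : ∀ ξ : ℂ, r < ENNReal.ofReal (‖ξ - xi1 a₁ b₁ x₀ y₀ z₀‖) →
      ENNReal.ofReal (‖ξ - xi1 a₁ b₁ x₀ y₀ z₀‖) < R →
      HasSum (fun n : ℤ => a n * (ξ - xi1 a₁ b₁ x₀ y₀ z₀) ^ n) (F₁ ξ))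
    (hd : ∀ ξ : ℂ, r < ENNReal.ofReal (‖ξ - xi1 a₁ b₁ x₀ y₀ z₀‖) →
      ENNReal.ofReal (‖ξ - xi1 a₁ b₁ x₀ y₀ z₀‖) < R →
      HasSum (fun n : ℤ => d n * (ξ - xi1 a₁ b₁ x₀ y₀ z₀) ^ n) (F₄ ξ))
    (hb : ∀ ξ : ℂ, r < ENNReal.ofReal (‖ξ - xi2 a₂ b₂ x₀ y₀ z₀‖) →
      ENNReal.ofReal (‖ξ - xi2 a₂ b₂ x₀ y₀ z₀‖) < R →
      HasSum (fun n : ℤ => b n * (ξ - xi2 a₂ b₂ x₀ y₀ z₀) ^ n) (F₂ ξ))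
    (hc : ∀ ξ : ℂ, r < ENNReal.ofReal (‖ξ - xi2 a₂ b₂ x₀ y₀ z₀‖) →
      ENNReal.ofReal (‖ξ - xi2 a₂ b₂ x₀ y₀ z₀‖) < R →
      HasSum (fun n : ℤ => c n * (ξ - xi2 a₂ b₂ x₀ y₀ z₀) ^ n) (F₃ ξ))
    (x y z : ℝ)
    (h₁l : r < ENNReal.ofReal (‖xi1 a₁ b₁ x y z - xi1 a₁ b₁ x₀ y₀ z₀‖))
    (h₁r : ENNReal.ofReal (‖xi1 a₁ b₁ x y z - xi1 a₁ b₁ x₀ y₀ z₀‖) < R)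
    (h₂l : r < ENNReal.ofReal (‖xi2 a₂ b₂ x y z - xi2 a₂ b₂ x₀ y₀ z₀‖))
    (h₂r : ENNReal.ofReal (‖xi2 a₂ b₂ x y z - xi2 a₂ b₂ x₀ y₀ z₀‖) < R) :
    Summable (fun n : ℤ =>
      hnorm ((a n • e1 + b n • e2 + c n • e3 + d n • e4) *
        zpowQ (zeta a₁ a₂ b₁ b₂ x y z - zeta a₁ a₂ b₁ b₂ x₀ y₀ z₀) n)) ∧
    ZSeriesTendsto (fun n : ℤ =>
      (a n • e1 + b n • e2 + c n • e3 + d n • e4) *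
        zpowQ (zeta a₁ a₂ b₁ b₂ x y z - zeta a₁ a₂ b₁ b₂ x₀ y₀ z₀) n)
      (F₁ (xi1 a₁ b₁ x y z) • e1 + F₂ (xi2 a₂ b₂ x y z) • e2 +
       F₃ (xi2 a₂ b₂ x y z) • e3 + F₄ (xi1 a₁ b₁ x y z) • e4) := by

  set w₁ := xi1 a₁ b₁ x y z - xi1 a₁ b₁ x₀ y₀ z₀ with hw₁def
  set w₂ := xi2 a₂ b₂ x y z - xi2 a₂ b₂ x₀ y₀ z₀ with hw₂def
  have hw₁ : w₁ ≠ 0 := by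
    have h0 : (0:ENNReal) < ENNReal.ofReal (‖w₁‖) :=
      lt_of_le_of_lt (zero_le (a := r)) h₁l
    have := (ENNReal.ofReal_pos).mp h0
    exact fun h => by simp [h] at this
  have hw₂ : w₂ ≠ 0 := by
    have h0 : (0:ENNReal) < ENNReal.ofReal (‖w₂‖) :=
      lt_of_le_of_lt (zero_le (a := r)) h₂l
    have := (ENNReal.ofReal_pos).mp h0
    exact fun h => by simp [h] at this
  have hterm : ∀ n : ℤ,
      (a n • e1 + b n • e2 + c n • e3 + d n • e4) *
        zpowQ (zeta a₁ a₂ b₁ b₂ x y z - zeta a₁ a₂ b₁ b₂ x₀ y₀ z₀) n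
      = (a n * w₁^n)•e1 + (b n * w₂^n)•e2 + (c n * w₂^n)•e3 + (d n * w₁^n)•e4 := by
    intro n
    rw [zeta_sub, zpowD _ _ hw₁ hw₂, mulL]
  have hsa := (ha _ h₁l h₁r).summable
  have hsb := (hb _ h₂l h₂r).summable
  have hsc := (hc _ h₂l h₂r).summable
  have hsd := (hd _ h₁l h₁r).summable
  have nsa : Summable (fun n : ℤ => ‖a n * w₁^n‖) := by
    have := (summable_norm_iff (E := ℂ)).mpr hsa
    simpa using this
  have nsb : Summable (fun n : ℤ => ‖b n * w₂^n‖) := by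
    have := (summable_norm_iff (E := ℂ)).mpr hsb
    simpa using this
  have nsc : Summable (fun n : ℤ => ‖c n * w₂^n‖) := by
    have := (summable_norm_iff (E := ℂ)).mpr hsc
    simpa using this
  have nsd : Summable (fun n : ℤ => ‖d n * w₁^n‖) := by
    have := (summable_norm_iff (E := ℂ)).mpr hsd
    simpa using this
  constructor
  · have hle : ∀ n : ℤ,
        hnorm ((a n • e1 + b n • e2 + c n • e3 + d n • e4) *
          zpowQ (zeta a₁ a₂ b₁ b₂ x y z - zeta a₁ a₂ b₁ b₂ x₀ y₀ z₀) n)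
        ≤ ‖a n * w₁^n‖ + ‖b n * w₂^n‖
          + ‖c n * w₂^n‖ + ‖d n * w₁^n‖ := by
      intro n
      rw [hterm n]
      exact hnorm_le _ _ _ _
    exact Summable.of_nonneg_of_le (fun n => hnorm_nonneg' _) hle
      (((nsa.add nsb).add nsc).add nsd)
  · unfold ZSeriesTendsto
    have hsumA : ∀ A : Finset ℤ,
        (∑ n ∈ A, (a n • e1 + b n • e2 + c n • e3 + d n • e4) *
          zpowQ (zeta a₁ a₂ b₁ b₂ x y z - zeta a₁ a₂ b₁ b₂ x₀ y₀ z₀) n)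
        - (F₁ (xi1 a₁ b₁ x y z) • e1 + F₂ (xi2 a₂ b₂ x y z) • e2 +
           F₃ (xi2 a₂ b₂ x y z) • e3 + F₄ (xi1 a₁ b₁ x y z) • e4)
        = ((∑ n ∈ A, a n * w₁^n) - F₁ (xi1 a₁ b₁ x y z))•e1
          + ((∑ n ∈ A, b n * w₂^n) - F₂ (xi2 a₂ b₂ x y z))•e2
          + ((∑ n ∈ A, c n * w₂^n) - F₃ (xi2 a₂ b₂ x y z))•e3
          + ((∑ n ∈ A, d n * w₁^n) - F₄ (xi1 a₁ b₁ x y z))•e4 := by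
      intro A
      have sum_smul' : ∀ (h : ℤ → ℂ) (v : HC),
          (∑ n ∈ A, h n • v) = (∑ n ∈ A, h n) • v := fun h v =>
        (Finset.sum_smul (R := ℂ) (M := HC) (f := h) (s := A) (x := v)).symm
      rw [Finset.sum_congr rfl fun n _ => hterm n,
        Finset.sum_add_distrib, Finset.sum_add_distrib, Finset.sum_add_distrib,
        sum_smul', sum_smul', sum_smul', sum_smul']
      have sub_smul' : ∀ (p q : ℂ) (v : HC), (p - q) • v = p • v - q • v :=
        fun p q v => sub_smul p q v
      rw [sub_smul', sub_smul', sub_smul', sub_smul']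
      abel
    have habs : ∀ (f : Finset ℤ → ℂ) (s : ℂ),
        Filter.Tendsto (fun A => f A) Filter.atTop (nhds s) →
        Filter.Tendsto (fun A => ‖f A - s‖) Filter.atTop (nhds 0) := by
      intro f s hf
      have := (hf.sub (tendsto_const_nhds (x := s))).norm
      simpa using this
    have t1 := habs _ _ (ha _ h₁l h₁r)
    have t2 := habs _ _ (hb _ h₂l h₂r)
    have t3 := habs _ _ (hc _ h₂l h₂r)
    have t4 := habs _ _ (hd _ h₁l h₁r)
    have tsum := ((t1.add t2).add t3).add t4
    simp only [add_zero] at tsum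
    apply squeeze_zero (fun A => hnorm_nonneg' _) _ tsum
    intro A
    rw [hsumA A]
    exact hnorm_le _ _ _ _
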